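/- Let (Y_n)_{n≥-2} be i.i.d. uniform on [0,1], Z_{n,1} = max{Y_n, Y_{n-2}, Y_{n-3}}, Z_{n,2} = Y_n, and A_n = {Z_{1,1} ≤ u_{n,1} < Z_{2,1}} ∪ {Z_{1,2} ≤ u_{n,2} < Z_{2,2}} with u_{n,j} = 1 - τ'_j/n, τ'_j > 0. Then n·P(A_n) converges as n → ∞ to 2τ'_1 + τ'_2 - min{τ'_1, τ'_2}, i.e., to τ'_1 + τ'_2 if τ'_2 ≥ τ'_1 and to 2τ'_1 if τ'_2 < τ'_1. -/

import Mathlib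

open MeasureTheory ProbabilityTheory Filter Set

lemma aux_prod5 {Ω : Type*} [MeasurableSpace Ω] (P : Measure Ω)
    (Y : ℤ → Ω → ℝ)
    (hIndep : iIndepFun Y P)
    (g : ℤ → Set ℝ) (hg : ∀ i, MeasurableSet (g i)) :
    P (Y (-2) ⁻¹' g (-2) ∩ Y (-1) ⁻¹' g (-1) ∩ Y 0 ⁻¹' g 0 ∩ Y 1 ⁻¹' g 1 ∩ Y 2 ⁻¹' g 2)
      = P (Y (-2) ⁻¹' g (-2)) * P (Y (-1) ⁻¹' g (-1)) * P (Y 0 ⁻¹' g 0) * P (Y 1 ⁻¹' g 1)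
        * P (Y 2 ⁻¹' g 2) := by
  have h := hIndep.measure_inter_preimage_eq_mul (S := ({-2,-1,0,1,2} : Finset ℤ))
    (sets := g) (fun i _ => hg i)
  have h2 : (⋂ i ∈ ({-2,-1,0,1,2} : Finset ℤ), Y i ⁻¹' g i)
      = Y (-2) ⁻¹' g (-2) ∩ Y (-1) ⁻¹' g (-1) ∩ Y 0 ⁻¹' g 0 ∩ Y 1 ⁻¹' g 1 ∩ Y 2 ⁻¹' g 2 := by
    ext ω
    simp only [Finset.mem_insert, Finset.mem_singleton, Set.mem_iInter, Set.mem_inter_iff]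
    constructor
    · intro hh
      exact ⟨⟨⟨⟨hh _ (by norm_num), hh _ (by norm_num)⟩, hh _ (by norm_num)⟩,
        hh _ (by norm_num)⟩, hh _ (by norm_num)⟩
    · rintro ⟨⟨⟨⟨h1, h2⟩, h3⟩, h4⟩, h5⟩ i hi
      rcases hi with rfl | rfl | rfl | rfl | rfl <;> assumption
  rw [h2] at h
  rw [h]
  rw [Finset.prod_insert (by decide), Finset.prod_insert (by decide),
    Finset.prod_insert (by decide), Finset.prod_insert (by decide), Finset.prod_singleton]
  ring


lemma master {Ω : Type*} [MeasurableSpace Ω] (P : Measure Ω) [IsProbabilityMeasure P]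
    (Y : ℤ → Ω → ℝ) (hYm : ∀ i, Measurable (Y i))
    (hIndep : iIndepFun Y P)
    (hUnif : ∀ i, Measure.map (Y i) P = volume.restrict (Icc (0:ℝ) 1))
    (a1 a2 : ℝ) (h01 : 0 ≤ a1) (h11 : a1 ≤ 1) (h02 : 0 ≤ a2) (h12 : a2 ≤ 1) :
    (P {ω | (max (Y 1 ω) (max (Y (-1) ω) (Y (-2) ω)) ≤ a1 ∧
            a1 < max (Y 2 ω) (max (Y 0 ω) (Y (-1) ω))) ∨
          (Y 1 ω ≤ a2 ∧ a2 < Y 2 ω)}).toReal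
      = (a1^3 - a1^5) + (a2 - a2^2)
        - (a1^2 * min a1 a2 * (1 - max a1 a2)
           + a1^2 * min a1 a2 * max (a1 - a2) 0 * (1 - a1)) := by
  have hIic : ∀ (i : ℤ) (t : ℝ), 0 ≤ t → t ≤ 1 → P (Y i ⁻¹' Iic t) = ENNReal.ofReal t := by
    intro i t h0 h1
    rw [← Measure.map_apply (hYm i) measurableSet_Iic, hUnif i,
      Measure.restrict_apply measurableSet_Iic]
    have : Iic t ∩ Icc (0:ℝ) 1 = Icc 0 t := by
      ext x; simp only [mem_inter_iff, mem_Iic, mem_Icc]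
      exact ⟨fun ⟨h, h0', _⟩ => ⟨h0', h⟩, fun ⟨h0', h⟩ => ⟨h, h0', h.trans h1⟩⟩
    rw [this, Real.volume_Icc, sub_zero]
  have hIoi : ∀ (i : ℤ) (t : ℝ), 0 ≤ t → t ≤ 1 → P (Y i ⁻¹' Ioi t) = ENNReal.ofReal (1 - t) := by
    intro i t h0 h1
    rw [← Measure.map_apply (hYm i) measurableSet_Ioi, hUnif i,
      Measure.restrict_apply measurableSet_Ioi]
    have : Ioi t ∩ Icc (0:ℝ) 1 = Ioc t 1 := by
      ext x; simp only [mem_inter_iff, mem_Ioi, mem_Icc, mem_Ioc]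
      exact ⟨fun ⟨h, _, h1'⟩ => ⟨h, h1'⟩, fun ⟨h, h1'⟩ => ⟨h, h0.trans h.le, h1'⟩⟩
    rw [this, Real.volume_Ioc]
  have hIoc : ∀ (i : ℤ) (s t : ℝ), 0 ≤ s → t ≤ 1 →
      P (Y i ⁻¹' Ioc s t) = ENNReal.ofReal (t - s) := by
    intro i s t h0 h1
    rw [← Measure.map_apply (hYm i) measurableSet_Ioc, hUnif i,
      Measure.restrict_apply measurableSet_Ioc]
    have : Ioc s t ∩ Icc (0:ℝ) 1 = Ioc s t := by
      ext x; simp only [mem_inter_iff, mem_Ioc, mem_Icc]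
      exact ⟨fun ⟨h, _⟩ => h, fun ⟨hs, ht⟩ => ⟨⟨hs, ht⟩, h0.trans hs.le, ht.trans h1⟩⟩
    rw [this, Real.volume_Ioc]
  set S : Set Ω := Y (-2) ⁻¹' Iic a1 ∩ Y (-1) ⁻¹' Iic a1 ∩ Y 1 ⁻¹' Iic a1 with hSdef
  set T : Set Ω := Y 0 ⁻¹' Iic a1 ∩ Y 2 ⁻¹' Iic a1 with hTdef
  set A : Set Ω := S \ T with hAdef
  set B : Set Ω := Y 1 ⁻¹' Iic a2 \ Y 2 ⁻¹' Iic a2 with hBdef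
  set C1 : Set Ω := Y (-2) ⁻¹' Iic a1 ∩ Y (-1) ⁻¹' Iic a1 ∩ Y 1 ⁻¹' Iic (min a1 a2)
      ∩ Y 2 ⁻¹' Ioi (max a1 a2) with hC1def
  set C2 : Set Ω := Y (-2) ⁻¹' Iic a1 ∩ Y (-1) ⁻¹' Iic a1 ∩ Y 0 ⁻¹' Ioi a1
      ∩ Y 1 ⁻¹' Iic (min a1 a2) ∩ Y 2 ⁻¹' Ioc a2 a1 with hC2def
  have mIic : ∀ (i : ℤ) (t : ℝ), MeasurableSet (Y i ⁻¹' Iic t) :=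
    fun i t => (hYm i) measurableSet_Iic
  have mS : MeasurableSet S := ((mIic _ _).inter (mIic _ _)).inter (mIic _ _)
  have mT : MeasurableSet T := (mIic _ _).inter (mIic _ _)
  have mA : MeasurableSet A := mS.diff mT
  have mB : MeasurableSet B := (mIic _ _).diff (mIic _ _)
  have mC1 : MeasurableSet C1 :=
    (((mIic _ _).inter (mIic _ _)).inter (mIic _ _)).inter ((hYm _) measurableSet_Ioi)
  have mC2 : MeasurableSet C2 :=
    ((((mIic _ _).inter (mIic _ _)).inter ((hYm _) measurableSet_Ioi)).inter
      (mIic _ _)).inter ((hYm _) measurableSet_Ioc)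
  have hW : {ω | (max (Y 1 ω) (max (Y (-1) ω) (Y (-2) ω)) ≤ a1 ∧
            a1 < max (Y 2 ω) (max (Y 0 ω) (Y (-1) ω))) ∨
          (Y 1 ω ≤ a2 ∧ a2 < Y 2 ω)} = A ∪ B := by
    ext ω
    simp only [hAdef, hBdef, hSdef, hTdef, mem_setOf_eq, mem_union, mem_diff,
      mem_inter_iff, mem_preimage, mem_Iic, max_le_iff, lt_max_iff, not_and_or,
      lt_iff_not_ge]
    tauto
  have hABeq : A ∩ B = C1 ∪ C2 := by
    ext ω
    simp only [hAdef, hBdef, hSdef, hTdef, hC1def, hC2def, mem_union, mem_diff,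
      mem_inter_iff, mem_preimage, mem_Iic, mem_Ioi, mem_Ioc, le_min_iff, max_lt_iff, le_max_iff,
      not_and_or, lt_iff_not_ge]
    tauto
  have hdisj : Disjoint C1 C2 := by
    rw [Set.disjoint_left]
    intro ω h1 h2
    simp only [hC1def, hC2def, mem_inter_iff, mem_preimage, mem_Ioi, mem_Ioc, mem_Iic]
      at h1 h2
    have := h1.2
    have := h2.2.2
    have := le_max_left a1 a2
    linarith
  have hmin0 : (0:ℝ) ≤ min a1 a2 := le_min h01 h02
  have hmin1 : min a1 a2 ≤ 1 := (min_le_left a1 a2).trans h11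
  have hmax0 : (0:ℝ) ≤ max a1 a2 := h01.trans (le_max_left a1 a2)
  have hmax1 : max a1 a2 ≤ 1 := max_le h11 h12
  have hPS : P S = ENNReal.ofReal a1 * ENNReal.ofReal a1 * ENNReal.ofReal a1 := by
    have h := aux_prod5 P Y hIndep (fun i => if i = 0 ∨ i = 2 then univ else Iic a1)
      (by intro i; split <;> [exact MeasurableSet.univ; exact measurableSet_Iic])
    norm_num at h
    rw [hSdef, h, hIic (-2) a1 h01 h11, hIic (-1) a1 h01 h11, hIic 1 a1 h01 h11]
  have hPST : P (S ∩ T) = ENNReal.ofReal a1 * ENNReal.ofReal a1 * ENNReal.ofReal a1 *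
      ENNReal.ofReal a1 * ENNReal.ofReal a1 := by
    have h := aux_prod5 P Y hIndep (fun _ => Iic a1) (fun _ => measurableSet_Iic)
    have e : S ∩ T = Y (-2) ⁻¹' Iic a1 ∩ Y (-1) ⁻¹' Iic a1 ∩ Y 0 ⁻¹' Iic a1 ∩
        Y 1 ⁻¹' Iic a1 ∩ Y 2 ⁻¹' Iic a1 := by
      rw [hSdef, hTdef]; ext ω; simp only [mem_inter_iff, mem_preimage]; tauto
    rw [e, h, hIic (-2) a1 h01 h11, hIic (-1) a1 h01 h11, hIic 0 a1 h01 h11,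
      hIic 1 a1 h01 h11, hIic 2 a1 h01 h11]
  have hPB1 : P (Y 1 ⁻¹' Iic a2) = ENNReal.ofReal a2 := hIic _ _ h02 h12
  have hPB2 : P (Y 1 ⁻¹' Iic a2 ∩ Y 2 ⁻¹' Iic a2) = ENNReal.ofReal a2 * ENNReal.ofReal a2 := by
    have h := aux_prod5 P Y hIndep (fun i => if i = 1 ∨ i = 2 then Iic a2 else univ)
      (by intro i; split <;> [exact measurableSet_Iic; exact MeasurableSet.univ])
    norm_num at h
    rw [h, hIic 1 a2 h02 h12, hIic 2 a2 h02 h12]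
  have hPC1 : P C1 = ENNReal.ofReal a1 * ENNReal.ofReal a1 * ENNReal.ofReal (min a1 a2) *
      ENNReal.ofReal (1 - max a1 a2) := by
    have h := aux_prod5 P Y hIndep
      (fun i => if i = 1 then Iic (min a1 a2) else if i = 2 then Ioi (max a1 a2)
        else if i = 0 then univ else Iic a1)
      (by intro i; split
          · exact measurableSet_Iic
          · split
            · exact measurableSet_Ioi
            · split <;> [exact MeasurableSet.univ; exact measurableSet_Iic])
    norm_num at h
    rw [hC1def, h, hIic (-2) a1 h01 h11, hIic (-1) a1 h01 h11,
      hIic 1 (min a1 a2) hmin0 hmin1, hIoi 2 (max a1 a2) hmax0 hmax1]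
  have hPC2 : P C2 = ENNReal.ofReal a1 * ENNReal.ofReal a1 * ENNReal.ofReal (1 - a1) *
      ENNReal.ofReal (min a1 a2) * ENNReal.ofReal (a1 - a2) := by
    have h := aux_prod5 P Y hIndep
      (fun i => if i = 0 then Ioi a1 else if i = 1 then Iic (min a1 a2)
        else if i = 2 then Ioc a2 a1 else Iic a1)
      (by intro i; split
          · exact measurableSet_Ioi
          · split
            · exact measurableSet_Iic
            · split <;> [exact measurableSet_Ioc; exact measurableSet_Iic])
    norm_num at h
    rw [hC2def, h, hIic (-2) a1 h01 h11, hIic (-1) a1 h01 h11, hIoi 0 a1 h01 h11,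
      hIic 1 (min a1 a2) hmin0 hmin1, hIoc 2 a2 a1 h02 h11]
  -- assembly
  have ne : ∀ s : Set Ω, P s ≠ ⊤ := fun s => measure_ne_top P s
  have k1 := measure_inter_add_diff (μ := P) S mT
  have k2 := measure_inter_add_diff (μ := P) (Y 1 ⁻¹' Iic a2) (mIic 2 a2)
  have k3 : P (A ∩ B) = P C1 + P C2 := by rw [hABeq]; exact measure_union hdisj mC2
  have k4 := measure_union_add_inter (μ := P) A mB
  have t1 : (P (S ∩ T)).toReal + (P A).toReal = (P S).toReal := by
    rw [← ENNReal.toReal_add (ne _) (ne _), ← hAdef] at *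
    exact congrArg ENNReal.toReal k1
  have t2 : (P (Y 1 ⁻¹' Iic a2 ∩ Y 2 ⁻¹' Iic a2)).toReal + (P B).toReal
      = (P (Y 1 ⁻¹' Iic a2)).toReal := by
    rw [← ENNReal.toReal_add (ne _) (ne _)]
    exact congrArg ENNReal.toReal k2
  have t3 : (P (A ∩ B)).toReal = (P C1).toReal + (P C2).toReal := by
    rw [k3, ENNReal.toReal_add (ne _) (ne _)]
  have t4 : (P (A ∪ B)).toReal + (P (A ∩ B)).toReal = (P A).toReal + (P B).toReal := by
    rw [← ENNReal.toReal_add (ne _) (ne _), ← ENNReal.toReal_add (ne _) (ne _)]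
    exact congrArg ENNReal.toReal k4
  have v1 : (P S).toReal = a1 ^ 3 := by
    rw [hPS, ENNReal.toReal_mul, ENNReal.toReal_mul, ENNReal.toReal_ofReal h01]; ring
  have v2 : (P (S ∩ T)).toReal = a1 ^ 5 := by
    rw [hPST, ENNReal.toReal_mul, ENNReal.toReal_mul, ENNReal.toReal_mul,
      ENNReal.toReal_mul, ENNReal.toReal_ofReal h01]; ring
  have v3 : (P (Y 1 ⁻¹' Iic a2)).toReal = a2 := by
    rw [hPB1, ENNReal.toReal_ofReal h02]
  have v4 : (P (Y 1 ⁻¹' Iic a2 ∩ Y 2 ⁻¹' Iic a2)).toReal = a2 ^ 2 := by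
    rw [hPB2, ENNReal.toReal_mul, ENNReal.toReal_ofReal h02]; ring
  have v5 : (P C1).toReal = a1 ^ 2 * min a1 a2 * (1 - max a1 a2) := by
    rw [hPC1, ENNReal.toReal_mul, ENNReal.toReal_mul, ENNReal.toReal_mul,
      ENNReal.toReal_ofReal h01, ENNReal.toReal_ofReal hmin0,
      ENNReal.toReal_ofReal (by linarith : (0:ℝ) ≤ 1 - max a1 a2)]; ring
  have v6 : (P C2).toReal = a1 ^ 2 * min a1 a2 * max (a1 - a2) 0 * (1 - a1) := by
    rw [hPC2, ENNReal.toReal_mul, ENNReal.toReal_mul, ENNReal.toReal_mul,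
      ENNReal.toReal_mul, ENNReal.toReal_ofReal h01, ENNReal.toReal_ofReal hmin0,
      ENNReal.toReal_ofReal (by linarith : (0:ℝ) ≤ 1 - a1), ENNReal.toReal_ofReal']
    ring
  rw [hW]
  linarith [t1, t2, t3, t4, v1, v2, v3, v4, v5, v6]

theorem stmt4
    {Ω : Type*} [MeasurableSpace Ω] (P : Measure Ω) [IsProbabilityMeasure P]
    (Y : ℤ → Ω → ℝ) (hYm : ∀ i, Measurable (Y i))
    (hIndep : iIndepFun Y P)
    (hUnif : ∀ i, Measure.map (Y i) P = volume.restrict (Icc (0:ℝ) 1))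
    (τ'₁ τ'₂ : ℝ) (hτ₁ : 0 < τ'₁) (hτ₂ : 0 < τ'₂)
    (Z₁ Z₂ : ℕ → Ω → ℝ)
    (hZ₁ : ∀ i : ℕ, Z₁ i = fun ω => max (Y i ω) (max (Y ((i:ℤ) - 2) ω) (Y ((i:ℤ) - 3) ω)))
    (hZ₂ : ∀ i : ℕ, Z₂ i = fun ω => Y i ω)
    (u₁ u₂ : ℕ → ℝ) (hu₁ : ∀ n : ℕ, u₁ n = 1 - τ'₁ / n) (hu₂ : ∀ n : ℕ, u₂ n = 1 - τ'₂ / n) :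
    Tendsto (fun n : ℕ => (n : ℝ) *
        (P {ω | (Z₁ 1 ω ≤ u₁ n ∧ u₁ n < Z₁ 2 ω) ∨ (Z₂ 1 ω ≤ u₂ n ∧ u₂ n < Z₂ 2 ω)}).toReal)
      atTop (nhds (2 * τ'₁ + τ'₂ - min τ'₁ τ'₂)) := by
  set G : ℝ → ℝ := fun x =>
    τ'₁ * (1 - τ'₁ * x)^3 * (2 - τ'₁ * x) + τ'₂ * (1 - τ'₂ * x)
      - min τ'₁ τ'₂ * (1 - τ'₁ * x)^2 * (1 - max τ'₁ τ'₂ * x)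
      - τ'₁ * ((max τ'₁ τ'₂ - τ'₁) * x) * (1 - τ'₁ * x)^2 * (1 - max τ'₁ τ'₂ * x) with hG
  have hGcont : Continuous G := by rw [hG]; continuity
  have hGlim : Tendsto (fun n : ℕ => G ((n:ℝ)⁻¹)) atTop (nhds (2 * τ'₁ + τ'₂ - min τ'₁ τ'₂)) := by
    have h1 : Tendsto (fun n : ℕ => ((n:ℝ))⁻¹) atTop (nhds 0) :=
      tendsto_inv_atTop_nhds_zero_nat
    have h2 := (hGcont.tendsto 0).comp h1
    have hG0 : G 0 = 2 * τ'₁ + τ'₂ - min τ'₁ τ'₂ := by rw [hG]; ring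
    rw [hG0] at h2
    exact h2
  refine Tendsto.congr' ?_ hGlim
  filter_upwards [eventually_ge_atTop 1, eventually_ge_atTop (⌈max τ'₁ τ'₂⌉₊)]
    with n hn1 hn2
  have hn0 : (0:ℝ) < n := by exact_mod_cast hn1
  have hmaxn : max τ'₁ τ'₂ ≤ (n:ℝ) := le_trans (Nat.le_ceil _) (by exact_mod_cast hn2)
  have hτ1n : τ'₁ / n ≤ 1 := (div_le_one hn0).2 ((le_max_left _ _).trans hmaxn)
  have hτ2n : τ'₂ / n ≤ 1 := (div_le_one hn0).2 ((le_max_right _ _).trans hmaxn)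
  have hd1 : 0 ≤ τ'₁ / n := by positivity
  have hd2 : 0 ≤ τ'₂ / n := by positivity
  have h01 : 0 ≤ 1 - τ'₁ / n := by linarith
  have h11 : 1 - τ'₁ / n ≤ 1 := by linarith
  have h02 : 0 ≤ 1 - τ'₂ / n := by linarith
  have h12 : 1 - τ'₂ / n ≤ 1 := by linarith
  have hset : {ω | (Z₁ 1 ω ≤ u₁ n ∧ u₁ n < Z₁ 2 ω) ∨ (Z₂ 1 ω ≤ u₂ n ∧ u₂ n < Z₂ 2 ω)}
      = {ω | (max (Y 1 ω) (max (Y (-1) ω) (Y (-2) ω)) ≤ u₁ n ∧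
            u₁ n < max (Y 2 ω) (max (Y 0 ω) (Y (-1) ω))) ∨
          (Y 1 ω ≤ u₂ n ∧ u₂ n < Y 2 ω)} := by
    ext ω
    rw [hZ₁ 1, hZ₁ 2, hZ₂ 1, hZ₂ 2]
    norm_num
  rw [hset, hu₁ n, hu₂ n,
    master P Y hYm hIndep hUnif _ _ h01 h11 h02 h12, hG]
  have hne : (n:ℝ) ≠ 0 := ne_of_gt hn0
  rcases le_total τ'₁ τ'₂ with hc | hc
  · have hdd : τ'₁ / n ≤ τ'₂ / n := by gcongr
    rw [min_eq_right (by linarith : (1:ℝ) - τ'₂/n ≤ 1 - τ'₁/n),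
      max_eq_left (by linarith : (1:ℝ) - τ'₂/n ≤ 1 - τ'₁/n),
      max_eq_left (by linarith : (0:ℝ) ≤ (1 - τ'₁/n) - (1 - τ'₂/n)),
      min_eq_left hc, max_eq_right hc]
    simp only [div_eq_mul_inv]
    apply mul_left_cancel₀ (inv_ne_zero hne)
    rw [← mul_assoc ((n:ℝ))⁻¹ (n:ℝ), inv_mul_cancel₀ hne, one_mul]
    ring
  · have hdd : τ'₂ / n ≤ τ'₁ / n := by gcongr
    rw [min_eq_left (by linarith : (1:ℝ) - τ'₁/n ≤ 1 - τ'₂/n),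
      max_eq_right (by linarith : (1:ℝ) - τ'₁/n ≤ 1 - τ'₂/n),
      max_eq_right (by linarith : (1:ℝ) - τ'₁/n - (1 - τ'₂/n) ≤ 0),
      min_eq_right hc, max_eq_left hc]
    simp only [div_eq_mul_inv]
    apply mul_left_cancel₀ (inv_ne_zero hne)
    rw [← mul_assoc ((n:ℝ))⁻¹ (n:ℝ), inv_mul_cancel₀ hne, one_mul]
    ring
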